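/- Let Y be an n×n positive semidefinite Hermitian matrix. Then for each 1 ≤ k ≤ n, the sum of the k largest eigenvalues of Y equals min over t ≥ 0 of k·t + Tr((Y − tI)_+), where (H)_+ denotes the positive part of a Hermitian matrix H. -/

import Mathlib

open Matrix ComplexOrder

/-- The square root of a positive semidefinite matrix, as defined in the older Mathlib
(`Matrix.PosSemidef.sqrt`, since removed). -/
noncomputable def Matrix.PosSemidef.sqrt {m : Type*} [Fintype m] [DecidableEq m] {𝕜 : Type*}
    [RCLike 𝕜] {A : Matrix m m 𝕜} (hA : A.PosSemidef) : Matrix m m 𝕜 :=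
  hA.1.eigenvectorUnitary.1 * diagonal ((↑) ∘ Real.sqrt ∘ hA.1.eigenvalues) *
  (star hA.1.eigenvectorUnitary : Matrix m m 𝕜)

lemma Matrix.PosSemidef.posSemidef_sqrt {m : Type*} [Fintype m] [DecidableEq m] {𝕜 : Type*}
    [RCLike 𝕜] {A : Matrix m m 𝕜} (hA : A.PosSemidef) : PosSemidef hA.sqrt := by
  apply PosSemidef.mul_mul_conjTranspose_same
  refine posSemidef_diagonal_iff.mpr fun i ↦ ?_
  rw [Function.comp_apply, RCLike.nonneg_iff]
  constructor
  · simp only [RCLike.ofReal_re]; exact Real.sqrt_nonneg _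
  · simp only [RCLike.ofReal_im]

open scoped MatrixOrder in
lemma psd_sqrt_eq_of_sq {n : ℕ} {A S : Matrix (Fin n) (Fin n) ℂ} (hA : A.PosSemidef)
    (hS : S.PosSemidef) (h : S ^ 2 = A) : hA.sqrt = S := by
  have e : hA.sqrt = CFC.sqrt A := by
    rw [CFC.sqrt_eq_cfc, cfc_nnreal_eq_real _ A, hA.1.cfc_eq]
    simp only [IsHermitian.cfc, Matrix.PosSemidef.sqrt]
    congr 3
    funext i
    simp [max_def]
    split_ifs with hi
    · simp [Real.sqrt_eq_zero'.mpr hi]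
    · rfl
  rw [e, CFC.sqrt_eq_iff _ _ hA.nonneg hS.nonneg, ← sq, h]

namespace Heron

variable {n : ℕ}

def WeakMaj {n : ℕ} (x y : Fin n → ℝ) : Prop :=
  ∀ s : Finset (Fin n), ∃ t : Finset (Fin n),
    t.card = s.card ∧ ∑ i ∈ s, x i ≤ ∑ i ∈ t, y i

def Maj {n : ℕ} (x y : Fin n → ℝ) : Prop :=
  WeakMaj x y ∧ ∑ i, x i = ∑ i, y i

lemma sandwich_posSemidef {S T : Matrix (Fin n) (Fin n) ℂ} (hS : S.IsHermitian)
    (hT : T.PosSemidef) : (S * T * S).PosSemidef := by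
  have h := hT.mul_mul_conjTranspose_same S
  rwa [hS.eq] at h

noncomputable def geomMean {A B : Matrix (Fin n) (Fin n) ℂ}
    (hA : A.PosDef) (hB : B.PosDef) : Matrix (Fin n) (Fin n) ℂ :=
  hA.posSemidef.sqrt *
    (sandwich_posSemidef hA.posSemidef.posSemidef_sqrt.isHermitian.inv
        hB.posSemidef).sqrt *
    hA.posSemidef.sqrt

lemma geomMean_posSemidef {A B : Matrix (Fin n) (Fin n) ℂ}
    (hA : A.PosDef) (hB : B.PosDef) : (geomMean hA hB).PosSemidef :=
  sandwich_posSemidef hA.posSemidef.posSemidef_sqrt.isHermitian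
    (Matrix.PosSemidef.posSemidef_sqrt _)

noncomputable def specMean {A B : Matrix (Fin n) (Fin n) ℂ}
    (hA : A.PosDef) (hB : B.PosDef) : Matrix (Fin n) (Fin n) ℂ :=
  (geomMean_posSemidef hA.inv hB).sqrt * A * (geomMean_posSemidef hA.inv hB).sqrt

def HasPosSpectrum (M : Matrix (Fin n) (Fin n) ℂ) : Prop :=
  ∀ z ∈ spectrum ℂ M, 0 < z.re ∧ z.im = 0

def IsPrincipalSqrt (M S : Matrix (Fin n) (Fin n) ℂ) : Prop :=
  S * S = M ∧ HasPosSpectrum S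

noncomputable def absMat (Y : Matrix (Fin n) (Fin n) ℂ) : Matrix (Fin n) (Fin n) ℂ :=
  (Matrix.posSemidef_conjTranspose_mul_self Y).sqrt

noncomputable def posPart (H : Matrix (Fin n) (Fin n) ℂ) : Matrix (Fin n) (Fin n) ℂ :=
  ((1 : ℂ) / 2) • (absMat H + H)

lemma half_abs_add (x : ℝ) : (1/2 : ℝ) * (|x| + x) = max x 0 := by
  rcases le_total 0 x with h | h
  · rw [abs_of_nonneg h, max_eq_left h]; ring
  · rw [abs_of_nonpos h, max_eq_right h]; ring

lemma conj_mul_conj (V : Matrix (Fin n) (Fin n) ℂ) (hV : star V * V = 1)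
    (a b : Fin n → ℂ) :
    (V * diagonal a * star V) * (V * diagonal b * star V) =
      V * diagonal (a * b) * star V := by
  simp only [mul_assoc]
  rw [← mul_assoc (star V) V, hV, one_mul, ← mul_assoc (diagonal a) (diagonal b),
    diagonal_mul_diagonal]
  rfl

lemma conj_posSemidef (V : Matrix (Fin n) (Fin n) ℂ) (c : Fin n → ℝ)
    (hc : ∀ i, 0 ≤ c i) :
    PosSemidef (V * diagonal (Complex.ofReal ∘ c) * star V) := by
  rw [Matrix.star_eq_conjTranspose]
  refine PosSemidef.mul_mul_conjTranspose_same ?_ V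
  refine posSemidef_diagonal_iff.mpr fun i ↦ ?_
  simpa using hc i

lemma conj_conjTranspose (V : Matrix (Fin n) (Fin n) ℂ) (c : Fin n → ℝ) :
    (V * diagonal (Complex.ofReal ∘ c) * star V)ᴴ
      = V * diagonal (Complex.ofReal ∘ c) * star V := by
  rw [Matrix.star_eq_conjTranspose]
  refine Matrix.isHermitian_mul_mul_conjTranspose V ?_
  rw [Matrix.IsHermitian, diagonal_conjTranspose]
  funext i
  simp [Function.comp_def, Pi.star_def, Complex.conj_ofReal, diagonal]

lemma trace_conj (V : Matrix (Fin n) (Fin n) ℂ) (hV : star V * V = 1)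
    (X : Matrix (Fin n) (Fin n) ℂ) :
    (V * X * star V).trace = X.trace := by
  rw [Matrix.trace_mul_cycle, hV, one_mul]

lemma trace_posPart_conj (V : Matrix (Fin n) (Fin n) ℂ) (hV : star V * V = 1)
    (d : Fin n → ℝ) :
    (posPart (V * diagonal (Complex.ofReal ∘ d) * star V)).trace.re
      = ∑ i, max (d i) 0 := by
  set H := V * diagonal (Complex.ofReal ∘ d) * star V with hH
  set S := V * diagonal (Complex.ofReal ∘ fun i => |d i|) * star V with hS
  have hSpsd : PosSemidef S := conj_posSemidef V _ fun i => abs_nonneg _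
  have hfun : (Complex.ofReal ∘ fun i => |d i|) * (Complex.ofReal ∘ fun i => |d i|)
      = (Complex.ofReal ∘ d) * (Complex.ofReal ∘ d) := by
    funext i
    simp only [Pi.mul_apply, Function.comp_apply, ← Complex.ofReal_mul, abs_mul_abs_self]
  have hsq : S ^ 2 = Hᴴ * H := by
    rw [pow_two, hH, conj_conjTranspose, hS, conj_mul_conj V hV, conj_mul_conj V hV, hfun]
  have habs : absMat H = S :=
    psd_sqrt_eq_of_sq (posSemidef_conjTranspose_mul_self H) hSpsd hsq
  have hadd : S + H = V * diagonal (Complex.ofReal ∘ fun i => |d i| + d i) * star V := by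
    rw [hS, hH, ← add_mul, ← mul_add, diagonal_add]
    congr 2
    funext i
    simp [Function.comp_def]
  rw [posPart, habs, hadd, Matrix.trace_smul, trace_conj V hV, Matrix.trace_diagonal]
  have h1 : ∑ i : Fin n, (Complex.ofReal ∘ fun i => |d i| + d i) i
      = ((∑ i, (|d i| + d i) : ℝ) : ℂ) := by
    simp [Function.comp_def]
  rw [h1, smul_eq_mul, show (1:ℂ)/2 = ((1/2:ℝ):ℂ) by norm_num, ← Complex.ofReal_mul,
    Complex.ofReal_re, Finset.mul_sum]
  exact Finset.sum_congr rfl fun i _ => half_abs_add (d i)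

lemma sub_smul_one_eq (Y : Matrix (Fin n) (Fin n) ℂ) (hY : Y.PosSemidef) (t : ℝ) :
    Y - (t : ℂ) • 1 =
      (hY.1.eigenvectorUnitary : Matrix (Fin n) (Fin n) ℂ) *
        diagonal (Complex.ofReal ∘ fun i => hY.1.eigenvalues i - t) *
        star (hY.1.eigenvectorUnitary : Matrix (Fin n) (Fin n) ℂ) := by
  set V := (hY.1.eigenvectorUnitary : Matrix (Fin n) (Fin n) ℂ) with hV
  have h2 : V * star V = 1 := hY.1.eigenvectorUnitary.2.2
  have hsp : Y = V * diagonal (Complex.ofReal ∘ hY.1.eigenvalues) * star V :=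
    hY.1.spectral_theorem
  have hid : (t : ℂ) • (1 : Matrix (Fin n) (Fin n) ℂ)
      = V * diagonal (Complex.ofReal ∘ fun _ => t) * star V := by
    have h3 : diagonal (Complex.ofReal ∘ fun _ : Fin n => t)
        = (t : ℂ) • (1 : Matrix (Fin n) (Fin n) ℂ) := (Matrix.smul_one_eq_diagonal ((t : ℂ))).symm
    rw [h3, Matrix.mul_smul, mul_one, Matrix.smul_mul, h2]
  calc Y - (t : ℂ) • 1
      = V * diagonal (Complex.ofReal ∘ hY.1.eigenvalues) * star V
        - V * diagonal (Complex.ofReal ∘ fun _ => t) * star V := by rw [← hsp, ← hid]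
    _ = V * diagonal (Complex.ofReal ∘ fun i => hY.1.eigenvalues i - t) * star V := by
        rw [← Matrix.sub_mul, ← Matrix.mul_sub, Matrix.diagonal_sub]
        congr 2
        funext i
        simp [Function.comp_def]

lemma kyfan_bound (lam : Fin n → ℝ) (k : ℕ) (s : Finset (Fin n)) (hs : s.card = k)
    (t : ℝ) (ht : 0 ≤ t) :
    ∑ i ∈ s, lam i ≤ k * t + ∑ i, max (lam i - t) 0 := by
  have h1 : ∑ i ∈ s, lam i ≤ ∑ i ∈ s, (t + max (lam i - t) 0) := by
    refine Finset.sum_le_sum fun i _ => ?_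
    have := le_max_left (lam i - t) 0
    linarith
  rw [Finset.sum_add_distrib, Finset.sum_const, hs, nsmul_eq_mul] at h1
  have h2 : ∑ i ∈ s, max (lam i - t) 0 ≤ ∑ i, max (lam i - t) 0 :=
    Finset.sum_le_sum_of_subset_of_nonneg (Finset.subset_univ s)
      (fun i _ _ => le_max_right _ _)
  linarith

lemma kyfan_opt (lam : Fin n → ℝ) (hlam : ∀ i, 0 ≤ lam i) (k : ℕ)
    (hk1 : 1 ≤ k) (hkn : k ≤ n) :
    ∃ t : ℝ, 0 ≤ t ∧ ∃ s : Finset (Fin n), s.card = k ∧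
      ∑ i ∈ s, lam i = k * t + ∑ i, max (lam i - t) 0 := by
  set σ := Tuple.sort lam with hσ
  have hmono : Monotone (lam ∘ σ) := Tuple.monotone_sort lam
  have hm : n - k < n := by omega
  set a : Fin n := ⟨n - k, hm⟩ with ha
  set t := lam (σ a) with htdef
  refine ⟨t, hlam _, (Finset.Ici a).map σ.toEmbedding, ?_, ?_⟩
  · rw [Finset.card_map, Fin.card_Ici]
    simp only [ha]
    omega
  · rw [Finset.sum_map]
    have hperm : ∑ i, max (lam i - t) 0 = ∑ j, max (lam (σ j) - t) 0 :=
      (Equiv.sum_comp σ (fun i => max (lam i - t) 0)).symm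
    rw [hperm]
    have hsplit : ∑ j, max (lam (σ j) - t) 0 = ∑ j ∈ Finset.Ici a, (lam (σ j) - t) := by
      rw [← Finset.sum_subset (Finset.subset_univ (Finset.Ici a))]
      · refine Finset.sum_congr rfl fun j hj => ?_
        rw [Finset.mem_Ici] at hj
        have : t ≤ lam (σ j) := hmono hj
        rw [max_eq_left (by linarith)]
      · intro j _ hj
        rw [Finset.mem_Ici, not_le] at hj
        have : lam (σ j) ≤ t := hmono hj.le
        rw [max_eq_right (by linarith)]
    rw [hsplit, Finset.sum_sub_distrib, Finset.sum_const, Fin.card_Ici, nsmul_eq_mul]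
    have hcard : ((n - (a:ℕ) : ℕ) : ℝ) = (k : ℝ) := by
      simp only [ha]
      norm_cast
      omega
    rw [hcard]
    have hemb : ∑ x ∈ Finset.Ici a, lam ((Equiv.toEmbedding σ) x)
        = ∑ x ∈ Finset.Ici a, lam (σ x) := rfl
    rw [hemb]
    ring

/-- Ky Fan threshold formula: the sum of the `k` largest
eigenvalues of `Y ≥ 0` is the minimum over `t ≥ 0` of `k·t + Tr((Y - tI)₊)`. -/
theorem kyfan_threshold_formula {n : ℕ} (Y : Matrix (Fin n) (Fin n) ℂ)
    (hY : Y.PosSemidef) (k : ℕ) (hk1 : 1 ≤ k) (hkn : k ≤ n) :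
    IsLeast
      {v : ℝ | ∃ t : ℝ, 0 ≤ t ∧
        v = k * t + (posPart (Y - (t : ℂ) • 1)).trace.re}
      (sSup {v : ℝ | ∃ s : Finset (Fin n), s.card = k ∧
        v = ∑ i ∈ s, hY.isHermitian.eigenvalues i}) := by
  set lam := hY.isHermitian.eigenvalues with hlamdef
  have hlam : ∀ i, 0 ≤ lam i := fun i => hY.eigenvalues_nonneg i
  have htrace : ∀ t : ℝ, (posPart (Y - (t : ℂ) • 1)).trace.re
      = ∑ i, max (lam i - t) 0 := by
    intro t
    rw [sub_smul_one_eq Y hY t]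
    exact trace_posPart_conj _ hY.1.eigenvectorUnitary.2.1 _
  obtain ⟨t₀, ht₀, s₀, hs₀, hopt⟩ := kyfan_opt lam hlam k hk1 hkn
  have hsup : sSup {v : ℝ | ∃ s : Finset (Fin n), s.card = k ∧ v = ∑ i ∈ s, lam i}
      = ∑ i ∈ s₀, lam i := by
    apply IsGreatest.csSup_eq
    constructor
    · exact ⟨s₀, hs₀, rfl⟩
    · rintro v ⟨s, hs, rfl⟩
      exact (kyfan_bound lam k s hs t₀ ht₀).trans_eq hopt.symm
  rw [hsup]
  constructor
  · exact ⟨t₀, ht₀, by rw [htrace t₀]; exact hopt⟩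
  · rintro v ⟨t, ht, rfl⟩
    rw [htrace t]
    exact kyfan_bound lam k s₀ hs₀ t ht

end Heron
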